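/- (Composing/Decomposing Theorem) Let p be a principal all of whose rules arise from a locally collision free set S, i.e., (p, v, p_a, k_a) ∈ R implies there exist i ∈ C ∪ D and (x_1,…,x_m) ∈ S with v = x_i and k_a = {(p_a, x_j) : j ∈ W_i}. Let F_p be the maximal fixed set with F_p ⊆ Im(S). Then p is composing/decomposing with respect to the stage ordering ≺_p: every rule of p restricted away from F_p is either composing (when i ∈ C) or decomposing (when i ∈ D), and the image of the composing rules {v : ∃x, x ≺_p v} is contained in Im(S). -/
import Mathlib


variable {V : Type*} {m : ℕ}

def ImS (S : Set (Fin m → V)) (C : Set (Fin m)) : Set V :=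
  {v | ∃ i ∈ C, ∃ x ∈ S, x i = v}

def Stage (S : Set (Fin m → V)) (C : Set (Fin m)) (W : Fin m → Set (Fin m)) :
    ℕ → Set V
  | 0 => (ImS S C)ᶜ
  | n + 1 => Stage S C W n ∪
      {v | ∃ i ∈ C, ∃ x ∈ S, x i = v ∧ ∀ j ∈ W i, x j ∈ Stage S C W n}

def SInf (S : Set (Fin m → V)) (C : Set (Fin m)) (W : Fin m → Set (Fin m)) : Set V :=
  ⋃ n, Stage S C W n

def precS (S : Set (Fin m → V)) (C : Set (Fin m)) (W : Fin m → Set (Fin m))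
    (v w : V) : Prop :=
  ∃ a b : ℕ, a < b ∧
    v ∈ Stage S C W a ∧ (∀ k < a, v ∉ Stage S C W k) ∧
    w ∈ Stage S C W b ∧ (∀ k < b, w ∉ Stage S C W k)

def ruleOf (S : Set (Fin m → V)) (C D : Set (Fin m)) (W : Fin m → Set (Fin m))
    (X : Set V) (v : V) : Prop :=
  ∃ i ∈ C ∪ D, ∃ x ∈ S, v = x i ∧ X = {u | ∃ j ∈ W i, x j = u}

def decomposingRule (S : Set (Fin m → V)) (C D : Set (Fin m))
    (W : Fin m → Set (Fin m)) (X : Set V) (x : V) : Prop :=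
  ∃ v ∈ X, precS S C W x v ∧
    ∀ X' : Set V, ruleOf S C D W X' v → (∀ u ∈ X', precS S C W u v) → x ∈ X'

/-- A set `G` is fixed for the rules arising from `S`. -/
def fixedFor (S : Set (Fin m → V)) (C D : Set (Fin m)) (W : Fin m → Set (Fin m))
    (G : Set V) : Prop :=
  ∀ X v, ruleOf S C D W X v → v ∈ G → ∃ w ∈ G, w ∈ X

section Aux

open Classical

lemma stage_mono (S : Set (Fin m → V)) (C : Set (Fin m)) (W : Fin m → Set (Fin m)) :
    Monotone (Stage S C W) := by
  apply monotone_nat_of_le_succ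
  intro n
  exact Set.subset_union_left

lemma precS_iff (S : Set (Fin m → V)) (C : Set (Fin m)) (W : Fin m → Set (Fin m))
    {v w : V} (hv : ∃ n, v ∈ Stage S C W n) (hw : ∃ n, w ∈ Stage S C W n) :
    precS S C W v w ↔ Nat.find hv < Nat.find hw := by
  constructor
  · rintro ⟨a, b, hab, hva, hva', hwb, hwb'⟩
    have ha : Nat.find hv = a :=
      le_antisymm (Nat.find_le hva) (le_of_not_gt fun h => hva' _ h (Nat.find_spec hv))
    have hb : Nat.find hw = b :=
      le_antisymm (Nat.find_le hwb) (le_of_not_gt fun h => hwb' _ h (Nat.find_spec hw))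
    omega
  · intro h
    exact ⟨Nat.find hv, Nat.find hw, h, Nat.find_spec hv,
      fun k hk => Nat.find_min hv hk, Nat.find_spec hw, fun k hk => Nat.find_min hw hk⟩

lemma key_lemma (S : Set (Fin m → V)) (C : Set (Fin m)) (W : Fin m → Set (Fin m))
    (hLCF2 : ∀ i ∈ C, ∀ t ∈ C, ∀ x ∈ S, ∀ y ∈ S,
      x i = y t → x '' (W i) = y '' (W t))
    {i : Fin m} (hi : i ∈ C) {x : Fin m → V} (hx : x ∈ S)
    (hS : ∃ n, x i ∈ Stage S C W n) :
    ∀ j ∈ W i, precS S C W (x j) (x i) := by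
  intro j hj
  have hNspec := Nat.find_spec hS
  have hN0 : Nat.find hS ≠ 0 := by
    intro h0
    rw [h0] at hNspec
    exact hNspec ⟨i, hi, x, hx, rfl⟩
  obtain ⟨M, hM⟩ : ∃ M, Nat.find hS = M + 1 := ⟨Nat.find hS - 1, by omega⟩
  have hnot : x i ∉ Stage S C W M := Nat.find_min hS (by omega)
  have hmem : x i ∈ Stage S C W (M + 1) := hM ▸ hNspec
  rcases hmem with hmem | hmem
  · exact absurd hmem hnot
  · obtain ⟨t, ht, y, hy, hyt, hall⟩ := hmem
    have himg : x '' (W i) = y '' (W t) := hLCF2 i hi t ht x hx y hy hyt.symm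
    have hxj : x j ∈ Stage S C W M := by
      have : x j ∈ y '' (W t) := himg ▸ ⟨j, hj, rfl⟩
      obtain ⟨j', hj', hje⟩ := this
      rw [← hje]; exact hall j' hj'
    have hexj : ∃ n, x j ∈ Stage S C W n := ⟨M, hxj⟩
    rw [precS_iff S C W hexj hS]
    have h1 : Nat.find hexj ≤ M := Nat.find_le hxj
    omega

end Aux
lemma compl_fixed (S : Set (Fin m → V)) (C D : Set (Fin m)) (W : Fin m → Set (Fin m))
    (hLCF1 : ∀ i ∈ D, ∃ h ∈ C, h ∈ W i ∧ i ∈ W h)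
    (hLCF2 : ∀ i ∈ C, ∀ t ∈ C, ∀ x ∈ S, ∀ y ∈ S,
      x i = y t → x '' (W i) = y '' (W t)) :
    fixedFor S C D W (SInf S C W)ᶜ := by
  rintro X v ⟨i, hi, x, hx, hv, hX⟩ hvG
  rcases hi with hiC | hiD
  · by_contra hcon
    push_neg at hcon
    have hall : ∀ j ∈ W i, ∃ n, x j ∈ Stage S C W n := by
      intro j hj
      have hxj : x j ∈ X := hX ▸ ⟨j, hj, rfl⟩
      by_contra hn
      push_neg at hn
      exact hcon (x j)
        (fun hmem => by obtain ⟨n, h⟩ := Set.mem_iUnion.mp hmem; exact hn n h) hxj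
    classical
    have hex : ∀ j : Fin m, ∃ n, j ∈ W i → x j ∈ Stage S C W n := by
      intro j
      by_cases hj : j ∈ W i
      · obtain ⟨n, hn⟩ := hall j hj
        exact ⟨n, fun _ => hn⟩
      · exact ⟨0, fun h => absurd h hj⟩
    choose f hf using hex
    set N := Finset.univ.sup f with hN
    have hstage : x i ∈ Stage S C W (N + 1) :=
      Or.inr ⟨i, hiC, x, hx, rfl, fun j hj =>
        stage_mono S C W (Finset.le_sup (Finset.mem_univ j)) (hf j hj)⟩
    exact hvG (Set.mem_iUnion.mpr ⟨N + 1, hv ▸ hstage⟩)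
  · obtain ⟨h, hhC, hhW, hiW⟩ := hLCF1 i hiD
    refine ⟨x h, ?_, hX ▸ ⟨h, hhW, rfl⟩⟩
    intro hmem
    have hexh : ∃ n, x h ∈ Stage S C W n := Set.mem_iUnion.mp hmem
    obtain ⟨a, b, _, hva, _, _, _⟩ := key_lemma S C W hLCF2 hhC hx hexh i hiW
    exact hvG (Set.mem_iUnion.mpr ⟨a, hv ▸ hva⟩)


theorem composing_decomposing
    (S : Set (Fin m → V)) (C D : Set (Fin m)) (W : Fin m → Set (Fin m))
    (hLCF1 : ∀ i ∈ D, ∃ h ∈ C, h ∈ W i ∧ i ∈ W h)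
    (hLCF2 : ∀ i ∈ C, ∀ t ∈ C, ∀ x ∈ S, ∀ y ∈ S,
      x i = y t → x '' (W i) = y '' (W t))
    (hCD : Disjoint C D)
    (Fp : Set V)
    (hFsub : Fp ⊆ ImS S C)
    (hFfix : fixedFor S C D W Fp)
    (hFmax : ∀ G : Set V, G ⊆ ImS S C → fixedFor S C D W G → G ⊆ Fp) :
    (∀ i ∈ C ∪ D, ∀ x ∈ S, x i ∉ Fp → (∀ j ∈ W i, x j ∉ Fp) →
      (i ∈ C → ∀ j ∈ W i, precS S C W (x j) (x i)) ∧
      (i ∈ D → decomposingRule S C D W {u | ∃ j ∈ W i, x j = u} (x i))) ∧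
    {v | ∃ u, precS S C W u v} ⊆ ImS S C := by
  have hcsub : (SInf S C W)ᶜ ⊆ ImS S C := by
    intro v hv
    by_contra hvI
    exact hv (Set.mem_iUnion.mpr ⟨0, hvI⟩)
  have hFp : (SInf S C W)ᶜ ⊆ Fp :=
    hFmax _ hcsub (compl_fixed S C D W hLCF1 hLCF2)
  have hnFp : ∀ v : V, v ∉ Fp → ∃ n, v ∈ Stage S C W n := by
    intro v hv
    by_contra hcon
    exact hv (hFp fun hmem => hcon (Set.mem_iUnion.mp hmem))
  constructor
  · intro i hi x hx hxi hW
    constructor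
    · intro hiC
      exact key_lemma S C W hLCF2 hiC hx (hnFp _ hxi)
    · intro hiD
      obtain ⟨h, hhC, hhW, hiW⟩ := hLCF1 i hiD
      have hexh : ∃ n, x h ∈ Stage S C W n := hnFp _ (hW h hhW)
      have hkey := key_lemma S C W hLCF2 hhC hx hexh
      refine ⟨x h, ⟨h, hhW, rfl⟩, hkey i hiW, ?_⟩
      rintro X' ⟨i', hi', x', hx', hveq, hX'eq⟩ hall
      rcases hi' with hi'C | hi'D
      · have himg : x '' (W h) = x' '' (W i') :=
          hLCF2 h hhC i' hi'C x hx x' hx' hveq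
        have : x i ∈ x' '' (W i') := himg ▸ ⟨i, hiW, rfl⟩
        obtain ⟨j, hj, hje⟩ := this
        exact hX'eq ▸ ⟨j, hj, hje⟩
      · exfalso
        obtain ⟨h', hh'C, hh'W, hi'W⟩ := hLCF1 i' hi'D
        have hmem' : x' h' ∈ X' := hX'eq ▸ ⟨h', hh'W, rfl⟩
        have P1 : precS S C W (x' h') (x' i') := hveq ▸ hall _ hmem'
        have e1 : ∃ n, x' h' ∈ Stage S C W n := by
          obtain ⟨a, b, _, hva, _⟩ := P1; exact ⟨a, hva⟩
        have P2 : precS S C W (x' i') (x' h') :=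
          key_lemma S C W hLCF2 hh'C hx' e1 i' hi'W
        have e2 : ∃ n, x' i' ∈ Stage S C W n := by
          obtain ⟨a, b, _, hva, _⟩ := P2; exact ⟨a, hva⟩
        rw [precS_iff S C W e1 e2] at P1
        rw [precS_iff S C W e2 e1] at P2
        omega
  · rintro v ⟨u, a, b, hab, _, _, hwb, hwb'⟩
    by_contra hv
    exact hwb' 0 (by omega) hv
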